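/- If p : [0,∞) → ℝ is a bounded measurable function with lim_{t→∞} p(t) = P̄, then the mean optimal distributed generation m(t) := x₀·e^{−at} + (b²/(2γ))·∫₀^t e^{−a(t−s)} (∫_s^∞ e^{−(ρ+a)(u−s)} p(u) du) ds + ((θ − ρc/b)/(2Λ_c(ρ + a)))·(1 − e^{−at}) converges as t → ∞ to the stationary level X̂_∞(P̄) := (P̄ + θ − ρc/b)/(2σ²K_c); in particular the corresponding mean installation rate (1/b)·m'(t) tends to zero. -/

import Mathlib

open MeasureTheory Filter Set Real Topology

lemma aux_int_exp {k : ℝ} (hk : 0 < k) :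
    ∫ v in Set.Ioi (0:ℝ), Real.exp (-k * v) = 1 / k := by
  have hderiv : ∀ x ∈ Set.Ici (0:ℝ),
      HasDerivAt (fun v => -Real.exp (-k * v) / k) (Real.exp (-k * x)) x := by
    intro x _
    have h := (((hasDerivAt_id x).const_mul (-k)).exp).neg.div_const k
    refine h.congr_deriv ?_
    field_simp; rfl
  have htend : Tendsto (fun v => -Real.exp (-k * v) / k) atTop (𝓝 0) := by
    have : Tendsto (fun v : ℝ => -k * v) atTop atBot :=
      tendsto_id.const_mul_atTop_of_neg (neg_neg_iff_pos.2 hk)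
    have := (Real.tendsto_exp_atBot.comp this).neg.div_const k
    simpa using this
  have := integral_Ioi_of_hasDerivAt_of_tendsto' hderiv (exp_neg_integrableOn_Ioi 0 hk) htend
  rw [show (1:ℝ)/k = 0 - (-Real.exp (-k*0)/k) by simp; ring]
  exact this

lemma aux_shift (k s : ℝ) (q : ℝ → ℝ) :
    (∫ u in Set.Ioi s, Real.exp (-k * (u - s)) * q u)
      = ∫ v in Set.Ioi (0:ℝ), Real.exp (-k * v) * q (v + s) := by
  rw [← integral_indicator measurableSet_Ioi, ← integral_indicator measurableSet_Ioi]
  rw [← integral_add_right_eq_self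
    (fun u => Set.indicator (Set.Ioi s) (fun u => Real.exp (-k * (u - s)) * q u) u) s]
  congr 1
  ext v
  by_cases h : (0:ℝ) < v
  · rw [Set.indicator_of_mem (by simpa using h.trans_le (le_of_eq (by ring)) : v + s ∈ Set.Ioi s),
      Set.indicator_of_mem (by exact h)]
    ring_nf
  · rw [Set.indicator_of_notMem (by simpa using h), Set.indicator_of_notMem (by simpa using h)]
lemma aux_g_bdd {k M : ℝ} (hk : 0 < k) {p : ℝ → ℝ} (hM : ∀ t, |p t| ≤ M) (s : ℝ) :
    |∫ u in Set.Ioi s, Real.exp (-k * (u - s)) * p u| ≤ M / k := by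
  rw [aux_shift]
  have hbd : ∀ᵐ v ∂(volume.restrict (Set.Ioi (0:ℝ))),
      ‖Real.exp (-k * v) * p (v + s)‖ ≤ M * Real.exp (-k * v) := by
    filter_upwards with v
    rw [norm_mul, Real.norm_eq_abs, Real.norm_eq_abs, abs_exp, mul_comm]
    exact mul_le_mul_of_nonneg_right (hM _) (exp_pos _).le
  have hint : Integrable (fun v => M * Real.exp (-k * v)) (volume.restrict (Set.Ioi (0:ℝ))) :=
    (exp_neg_integrableOn_Ioi 0 hk).const_mul M
  calc |∫ v in Set.Ioi (0:ℝ), Real.exp (-k * v) * p (v + s)|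
      ≤ ∫ v in Set.Ioi (0:ℝ), M * Real.exp (-k * v) :=
        norm_integral_le_of_norm_le hint hbd
    _ = M / k := by rw [integral_const_mul, aux_int_exp hk]; ring

lemma aux_g_integrableOn {k : ℝ} (hk : 0 < k) {p : ℝ → ℝ} (hp_meas : Measurable p)
    {M : ℝ} (hM : ∀ t, |p t| ≤ M) (c : ℝ) :
    IntegrableOn (fun u => Real.exp (-k * u) * p u) (Set.Ioi c) := by
  have := ((exp_neg_integrableOn_Ioi c hk).bdd_mul
    (hp_meas.aestronglyMeasurable) (Filter.Eventually.of_forall fun x => by simpa using hM x))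
  exact this.congr (Filter.Eventually.of_forall fun x => mul_comm _ _)

lemma aux_g_cont {k : ℝ} (hk : 0 < k) {p : ℝ → ℝ} (hp_meas : Measurable p)
    {M : ℝ} (hM : ∀ t, |p t| ≤ M) :
    Continuous (fun s => ∫ u in Set.Ioi s, Real.exp (-k * (u - s)) * p u) := by
  have hint : ∀ c, IntegrableOn (fun u => Real.exp (-k * u) * p u) (Set.Ioi c) :=
    aux_g_integrableOn hk hp_meas hM
  -- H s = H 0 - ∫ in 0..s
  have hH : ∀ s : ℝ, (∫ u in Set.Ioi s, Real.exp (-k * u) * p u)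
      = (∫ u in Set.Ioi (0:ℝ), Real.exp (-k * u) * p u)
        - ∫ u in (0:ℝ)..s, Real.exp (-k * u) * p u := by
    intro s
    rcases le_or_gt 0 s with hs | hs
    · rw [intervalIntegral.integral_of_le hs, eq_sub_iff_add_eq, add_comm,
        ← setIntegral_union (Set.Ioc_disjoint_Ioi le_rfl) measurableSet_Ioi
          ((hint 0).mono Set.Ioc_subset_Ioi_self le_rfl) (hint s),
        Set.Ioc_union_Ioi_eq_Ioi hs]
    · rw [intervalIntegral.integral_of_ge hs.le, sub_neg_eq_add, add_comm,
        ← setIntegral_union (Set.Ioc_disjoint_Ioi le_rfl) measurableSet_Ioi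
          ((hint s).mono Set.Ioc_subset_Ioi_self le_rfl) (hint 0),
        Set.Ioc_union_Ioi_eq_Ioi hs.le]
  have hprim : Continuous (fun s => ∫ u in (0:ℝ)..s, Real.exp (-k * u) * p u) := by
    apply intervalIntegral.continuous_primitive
    intro a b
    apply IntegrableOn.intervalIntegrable
    refine (hint ((min a b) - 1)).mono (fun x hx => Set.mem_Ioi.2 ?_) le_rfl
    have h1 : min a b ≤ x := hx.1
    linarith
  have hfact : ∀ s, (∫ u in Set.Ioi s, Real.exp (-k * (u - s)) * p u)
      = Real.exp (k * s) * ∫ u in Set.Ioi s, Real.exp (-k * u) * p u := by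
    intro s
    rw [← integral_const_mul]
    apply setIntegral_congr_fun measurableSet_Ioi
    intro u _
    show Real.exp (-k * (u - s)) * p u = Real.exp (k * s) * (Real.exp (-k * u) * p u)
    rw [← mul_assoc, ← Real.exp_add]
    ring_nf
  have heq : (fun s => ∫ u in Set.Ioi s, Real.exp (-k * (u - s)) * p u)
      = fun s => Real.exp (k * s) * ((∫ u in Set.Ioi (0:ℝ), Real.exp (-k * u) * p u)
        - ∫ u in (0:ℝ)..s, Real.exp (-k * u) * p u) := by
    ext s; rw [hfact s, hH s]
  rw [heq]
  exact (Real.continuous_exp.comp (continuous_const.mul continuous_id)).mul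
    (continuous_const.sub hprim)
lemma aux_g_tendsto {k M Pbar : ℝ} (hk : 0 < k) {p : ℝ → ℝ} (hp_meas : Measurable p)
    (hM : ∀ t, |p t| ≤ M) (hp_lim : Tendsto p atTop (𝓝 Pbar)) :
    Tendsto (fun s => ∫ u in Set.Ioi s, Real.exp (-k * (u - s)) * p u) atTop
      (𝓝 (Pbar / k)) := by
  have key : ∀ s, (∫ u in Set.Ioi s, Real.exp (-k * (u - s)) * p u)
      = ∫ v in Set.Ioi (0:ℝ), Real.exp (-k * v) * p (v + s) := fun s => aux_shift k s p
  have hlim2 : Tendsto (fun s => ∫ v in Set.Ioi (0:ℝ), Real.exp (-k * v) * p (v + s)) atTop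
      (𝓝 (∫ v in Set.Ioi (0:ℝ), Real.exp (-k * v) * Pbar)) := by
    apply tendsto_integral_filter_of_dominated_convergence (fun v => M * Real.exp (-k * v))
    · filter_upwards with s
      exact ((Real.measurable_exp.comp (measurable_const.mul measurable_id)).mul
        (hp_meas.comp (measurable_id.add_const s))).aestronglyMeasurable
    · filter_upwards with s
      filter_upwards with v
      rw [norm_mul, Real.norm_eq_abs, Real.norm_eq_abs, abs_exp, mul_comm]
      exact mul_le_mul_of_nonneg_right (hM _) (exp_pos _).le
    · exact (exp_neg_integrableOn_Ioi 0 hk).const_mul M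
    · filter_upwards with v
      exact (hp_lim.comp (tendsto_atTop_add_const_left atTop v tendsto_id)).const_mul _
  rw [show Pbar / k = ∫ v in Set.Ioi (0:ℝ), Real.exp (-k * v) * Pbar by
    rw [integral_mul_const, aux_int_exp hk]; ring]
  exact hlim2.congr fun s => (key s).symm

lemma aux_conv_tendsto {A L C : ℝ} (hA : 0 < A) {g : ℝ → ℝ} (hg : Continuous g)
    (hgb : ∀ s, |g s| ≤ C) (hgl : Tendsto g atTop (𝓝 L)) :
    Tendsto (fun t => ∫ s in Set.Ioc (0:ℝ) t, Real.exp (-A * (t - s)) * g s) atTop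
      (𝓝 (L / A)) := by
  have key : ∀ t, (∫ s in Set.Ioc (0:ℝ) t, Real.exp (-A * (t - s)) * g s)
      = ∫ r, Set.indicator (Set.Ico 0 t) (fun r => Real.exp (-A * r) * g (t - r)) r := by
    intro t
    rw [← integral_indicator measurableSet_Ioc]
    have hneg : (∫ r, Set.indicator (Set.Ioc (0:ℝ) t)
        (fun s => Real.exp (-A * (t - s)) * g s) r)
        = ∫ r, Set.indicator (Set.Ioc (0:ℝ) t)
          (fun s => Real.exp (-A * (t - s)) * g s) (t - r) := by
      rw [← integral_neg_eq_self (fun r => Set.indicator (Set.Ioc (0:ℝ) t)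
        (fun s => Real.exp (-A * (t - s)) * g s) (t - r)) volume]
      have : (fun r : ℝ => Set.indicator (Set.Ioc (0:ℝ) t)
          (fun s => Real.exp (-A * (t - s)) * g s) (t - -r))
          = fun r : ℝ => Set.indicator (Set.Ioc (0:ℝ) t)
            (fun s => Real.exp (-A * (t - s)) * g s) (r + t) := by
        ext r; congr 1; ring
      rw [this, integral_add_right_eq_self]
    rw [hneg]
    congr 1
    ext r
    by_cases h : r ∈ Set.Ico (0:ℝ) t
    · rw [Set.indicator_of_mem (by constructor <;> [linarith [h.2]; linarith [h.1]] :
        t - r ∈ Set.Ioc (0:ℝ) t), Set.indicator_of_mem h]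
      congr 2
      ring
    · rw [Set.indicator_of_notMem, Set.indicator_of_notMem h]
      intro hc
      exact h ⟨by linarith [hc.2], by linarith [hc.1]⟩
  have hC : 0 ≤ C := le_trans (abs_nonneg _) (hgb 0)
  have hlim2 : Tendsto (fun t => ∫ r, Set.indicator (Set.Ico 0 t)
      (fun r => Real.exp (-A * r) * g (t - r)) r) atTop
      (𝓝 (∫ r, Set.indicator (Set.Ioi (0:ℝ)) (fun r => Real.exp (-A * r) * L) r)) := by
    apply tendsto_integral_filter_of_dominated_convergence
      (fun r => Set.indicator (Set.Ici (0:ℝ)) (fun r => C * Real.exp (-A * r)) r)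
    · filter_upwards with t
      exact (((Real.continuous_exp.comp (continuous_const.mul continuous_id)).mul
        (hg.comp (continuous_const.sub continuous_id))).aestronglyMeasurable).indicator
        measurableSet_Ico
    · filter_upwards with t
      filter_upwards with r
      by_cases h : r ∈ Set.Ico (0:ℝ) t
      · rw [Set.indicator_of_mem h, Set.indicator_of_mem (Set.Ico_subset_Ici_self h)]
        rw [norm_mul, Real.norm_eq_abs, Real.norm_eq_abs, abs_exp, mul_comm (C : ℝ)]
        exact mul_le_mul_of_nonneg_left (hgb _) (exp_pos _).le
      · rw [Set.indicator_of_notMem h]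
        simp only [norm_zero]
        apply Set.indicator_nonneg
        intro r _
        positivity
    · rw [integrable_indicator_iff measurableSet_Ici]
      have hIoi : IntegrableOn (fun r => C * Real.exp (-A * r)) (Set.Ioi (0:ℝ)) :=
        (exp_neg_integrableOn_Ioi 0 hA).const_mul C
      exact hIoi.congr_set_ae Ioi_ae_eq_Ici.symm
    · have h0 : (volume : Measure ℝ) {(0:ℝ)} = 0 := measure_singleton 0
      filter_upwards [compl_mem_ae_iff.2 h0] with r hr
      rcases lt_or_gt_of_ne (by simpa using hr : r ≠ 0) with hneg | hpos
      · rw [Set.indicator_of_notMem (by simp only [Set.mem_Ioi, not_lt]; exact hneg.le)]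
        apply Tendsto.congr' _ tendsto_const_nhds
        filter_upwards with t
        rw [Set.indicator_of_notMem (by intro hc; exact absurd hc.1 (not_le.2 hneg))]
      · rw [Set.indicator_of_mem (Set.mem_Ioi.2 hpos)]
        apply Tendsto.congr' _ (((hgl.comp (tendsto_atTop_add_const_right atTop (-r)
          tendsto_id)).const_mul (Real.exp (-A * r))))
        filter_upwards [Ioi_mem_atTop r] with t ht
        rw [Set.indicator_of_mem (Set.mem_Ico.mpr ⟨hpos.le, ht⟩)]
        simp [sub_eq_add_neg]
  rw [show L / A = ∫ r, Set.indicator (Set.Ioi (0:ℝ)) (fun r => Real.exp (-A * r) * L) r by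
    rw [integral_indicator measurableSet_Ioi, integral_mul_const, aux_int_exp hA]; ring]
  exact hlim2.congr fun t => (key t).symm

/-- deterministic content of Proposition 3.1: if the mean price
`p(t)` is bounded, measurable, and converges to `P̄`, then the mean optimal
distributed generation `m(t)` converges to the stationary level
`X̂_∞(P̄) = (P̄ + θ − ρc/b)/(2σ²K_c)`, and the mean installation rate
`(1/b)·m'(t)` tends to zero. -/
theorem stmt_6 (ρ σ b γ η : ℝ) (hρ : 0 < ρ) (hσ : 0 < σ) (hb : 0 < b)
    (hγ : 0 < γ) (hη : 0 < η) (hρσ : σ ^ 2 < ρ)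
    (θ c x₀ : ℝ)
    (Kc Λc a : ℝ)
    (hKc : Kc = (γ / (2 * b ^ 2)) *
      (-(ρ - σ ^ 2) + Real.sqrt ((ρ - σ ^ 2) ^ 2 + 4 * b ^ 2 * η / γ)))
    (hΛc : Λc = (γ / (2 * b ^ 2)) *
      (-ρ + Real.sqrt (ρ ^ 2 + 4 * b ^ 2 * σ ^ 2 * Kc / γ)))
    (ha : a = b ^ 2 * Λc / γ)
    (p : ℝ → ℝ) (hp_meas : Measurable p) (hp_bdd : ∃ M : ℝ, ∀ t, |p t| ≤ M)
    (Pbar : ℝ) (hp_lim : Tendsto p atTop (nhds Pbar))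
    (m : ℝ → ℝ)
    (hm : ∀ t : ℝ, m t =
      x₀ * Real.exp (-a * t) +
      (b ^ 2 / (2 * γ)) *
        (∫ s in Set.Ioc (0 : ℝ) t, Real.exp (-a * (t - s)) *
          ∫ u in Set.Ioi s, Real.exp (-(ρ + a) * (u - s)) * p u) +
      ((θ - ρ * c / b) / (2 * Λc * (ρ + a))) * (1 - Real.exp (-a * t))) :
    Tendsto m atTop (nhds ((Pbar + θ - ρ * c / b) / (2 * σ ^ 2 * Kc))) ∧
      Tendsto (fun t : ℝ => (1 / b) * deriv m t) atTop (nhds 0) := by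
  obtain ⟨M, hM⟩ := hp_bdd
  have hb2 : (0:ℝ) < b ^ 2 := by positivity
  -- positivity of Kc
  have hKpos : 0 < Kc := by
    rw [hKc]
    apply mul_pos (by positivity)
    have h1 : ρ - σ^2 < Real.sqrt ((ρ - σ ^ 2) ^ 2 + 4 * b ^ 2 * η / γ) := by
      rw [Real.lt_sqrt (by linarith)]
      have : 0 < 4 * b ^ 2 * η / γ := by positivity
      linarith
    linarith
  have hΛpos : 0 < Λc := by
    rw [hΛc]
    apply mul_pos (by positivity)
    have h1 : ρ < Real.sqrt (ρ ^ 2 + 4 * b ^ 2 * σ ^ 2 * Kc / γ) := by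
      rw [Real.lt_sqrt hρ.le]
      have : 0 < 4 * b ^ 2 * σ ^ 2 * Kc / γ :=
        div_pos (mul_pos (mul_pos (by positivity) (pow_pos hσ 2)) hKpos) hγ
      linarith
    linarith
  have hapos : 0 < a := by
    rw [ha]; exact div_pos (mul_pos hb2 hΛpos) hγ
  have hkpos : 0 < ρ + a := by linarith
  -- key algebraic identities
  set S := Real.sqrt (ρ ^ 2 + 4 * b ^ 2 * σ ^ 2 * Kc / γ) with hSdef
  have hS2 : S ^ 2 = ρ ^ 2 + 4 * b ^ 2 * σ ^ 2 * Kc / γ := by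
    apply Real.sq_sqrt
    have : 0 < 4 * b ^ 2 * σ ^ 2 * Kc / γ :=
      div_pos (mul_pos (mul_pos (by positivity) (pow_pos hσ 2)) hKpos) hγ
    nlinarith [sq_nonneg ρ]
  have e1 : a = (-ρ + S) / 2 := by
    rw [ha, hΛc]; field_simp
  have idΛ : Λc * (ρ + a) = σ ^ 2 * Kc := by
    rw [hΛc, e1]
    have hgoal : γ / (2 * b ^ 2) * (-ρ + S) * (ρ + (-ρ + S) / 2)
        = γ * (S ^ 2 - ρ ^ 2) / (4 * b ^ 2) := by
      ring
    rw [hgoal, hS2]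
    field_simp
    ring
  have idak : γ * (a * (ρ + a)) = b ^ 2 * (σ ^ 2 * Kc) := by
    calc γ * (a * (ρ + a)) = b ^ 2 * (Λc * (ρ + a)) := by rw [ha]; field_simp
      _ = b ^ 2 * (σ ^ 2 * Kc) := by rw [idΛ]
  have hσK : (0:ℝ) < σ ^ 2 * Kc := mul_pos (pow_pos hσ 2) hKpos
  -- limit machinery
  set g : ℝ → ℝ := fun s => ∫ u in Set.Ioi s, Real.exp (-(ρ + a) * (u - s)) * p u with hgdef
  have hg_lim : Tendsto g atTop (𝓝 (Pbar / (ρ + a))) := aux_g_tendsto hkpos hp_meas hM hp_lim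
  have hg_cont : Continuous g := aux_g_cont hkpos hp_meas hM
  have hg_bdd : ∀ s, |g s| ≤ M / (ρ + a) := fun s => aux_g_bdd hkpos hM s
  have hF_lim : Tendsto (fun t => ∫ s in Set.Ioc (0:ℝ) t, Real.exp (-a * (t - s)) * g s) atTop
      (𝓝 ((Pbar / (ρ + a)) / a)) := aux_conv_tendsto hapos hg_cont hg_bdd hg_lim
  have hexp0 : Tendsto (fun t => Real.exp (-a * t)) atTop (𝓝 0) := by
    have h1 : Tendsto (fun t : ℝ => -a * t) atTop atBot :=
      tendsto_id.const_mul_atTop_of_neg (neg_neg_iff_pos.2 hapos)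
    exact Real.tendsto_exp_atBot.comp h1
  constructor
  · have hmt : Tendsto (fun t => x₀ * Real.exp (-a * t) +
        (b ^ 2 / (2 * γ)) * (∫ s in Set.Ioc (0:ℝ) t, Real.exp (-a * (t - s)) * g s) +
        ((θ - ρ * c / b) / (2 * Λc * (ρ + a))) * (1 - Real.exp (-a * t))) atTop
        (𝓝 (x₀ * 0 + (b ^ 2 / (2 * γ)) * ((Pbar / (ρ + a)) / a) +
          ((θ - ρ * c / b) / (2 * Λc * (ρ + a))) * (1 - 0))) :=
      ((tendsto_const_nhds.mul hexp0).add (tendsto_const_nhds.mul hF_lim)).add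
        (tendsto_const_nhds.mul (tendsto_const_nhds.sub hexp0))
    have harith : x₀ * 0 + (b ^ 2 / (2 * γ)) * ((Pbar / (ρ + a)) / a) +
        ((θ - ρ * c / b) / (2 * Λc * (ρ + a))) * (1 - 0)
        = (Pbar + θ - ρ * c / b) / (2 * σ ^ 2 * Kc) := by
      have hden : 2 * Λc * (ρ + a) = 2 * σ ^ 2 * Kc := by
        rw [mul_assoc, idΛ, mul_assoc]
      have termA : b ^ 2 / (2 * γ) * (Pbar / (ρ + a) / a) = Pbar / (2 * σ ^ 2 * Kc) := by
        have h1 : (ρ + a) ≠ 0 := hkpos.ne'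
        have h2 : a ≠ 0 := hapos.ne'
        have h3 : γ ≠ 0 := hγ.ne'
        have h4 : σ ^ 2 * Kc ≠ 0 := hσK.ne'
        have h5 : Kc ≠ 0 := hKpos.ne'
        field_simp
        linear_combination (-Pbar) * idak
      rw [hden, termA]
      field_simp
      ring
    rw [← harith]
    exact hmt.congr fun t => (hm t).symm
  · -- installation rate tends to zero
    have hcont2 : Continuous fun s => Real.exp (a * s) * g s :=
      (Real.continuous_exp.comp (continuous_const.mul continuous_id)).mul hg_cont
    set G : ℝ → ℝ := fun t => ∫ s in (0:ℝ)..t, Real.exp (a * s) * g s with hGdef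
    have hFeq : ∀ t : ℝ, 0 ≤ t →
        (∫ s in Set.Ioc (0:ℝ) t, Real.exp (-a * (t - s)) * g s)
          = Real.exp (-a * t) * G t := by
      intro t ht
      show _ = Real.exp (-a * t) * ∫ s in (0:ℝ)..t, Real.exp (a * s) * g s
      rw [intervalIntegral.integral_of_le ht, ← integral_const_mul]
      apply setIntegral_congr_fun measurableSet_Ioc
      intro s _
      show Real.exp (-a * (t - s)) * g s = Real.exp (-a * t) * (Real.exp (a * s) * g s)
      rw [← mul_assoc, ← Real.exp_add]
      ring_nf
    set D : ℝ → ℝ := fun t => x₀ * (Real.exp (-a * t) * -a)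
      + b ^ 2 / (2 * γ) * ((Real.exp (-a * t) * -a) * G t
        + Real.exp (-a * t) * (Real.exp (a * t) * g t))
      + (θ - ρ * c / b) / (2 * Λc * (ρ + a)) * (0 - Real.exp (-a * t) * -a) with hDdef
    have hDm : ∀ t : ℝ, 0 < t → HasDerivAt m (D t) t := by
      intro t ht
      have hG : HasDerivAt G (Real.exp (a * t) * g t) t :=
        intervalIntegral.integral_hasDerivAt_right ((hcont2.intervalIntegrable) _ _)
          (hcont2.stronglyMeasurableAtFilter _ _) hcont2.continuousAt
      have hE : HasDerivAt (fun u => Real.exp (-a * u)) (Real.exp (-a * t) * -a) t := by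
        have h := ((hasDerivAt_id t).const_mul (-a)).exp
        simpa using h
      have hφ : HasDerivAt (fun u => x₀ * Real.exp (-a * u)
          + b ^ 2 / (2 * γ) * (Real.exp (-a * u) * G u)
          + (θ - ρ * c / b) / (2 * Λc * (ρ + a)) * (1 - Real.exp (-a * u))) (D t) t :=
        ((hE.const_mul x₀).add ((hE.mul hG).const_mul _)).add
          (((hasDerivAt_const t (1:ℝ)).sub hE).const_mul _)
      apply hφ.congr_of_eventuallyEq
      filter_upwards [isOpen_Ioi.mem_nhds ht] with u hu
      rw [hm u, hFeq u (le_of_lt hu)]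
    have hFG : Tendsto (fun t => Real.exp (-a * t) * G t) atTop
        (𝓝 (Pbar / (ρ + a) / a)) := by
      apply hF_lim.congr'
      filter_upwards [Ici_mem_atTop (0:ℝ)] with t ht
      exact hFeq t ht
    have hDlim : Tendsto D atTop (𝓝 0) := by
      have hlim : Tendsto (fun t => x₀ * (Real.exp (-a * t) * -a)
          + b ^ 2 / (2 * γ) * (-a * (Real.exp (-a * t) * G t) + g t)
          + (θ - ρ * c / b) / (2 * Λc * (ρ + a)) * (0 - Real.exp (-a * t) * -a)) atTop
          (𝓝 (x₀ * (0 * -a) + b ^ 2 / (2 * γ) * (-a * (Pbar / (ρ + a) / a) + Pbar / (ρ + a))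
            + (θ - ρ * c / b) / (2 * Λc * (ρ + a)) * (0 - 0 * -a))) :=
        ((tendsto_const_nhds.mul (hexp0.mul tendsto_const_nhds)).add
          (tendsto_const_nhds.mul ((hFG.const_mul (-a)).add hg_lim))).add
          (tendsto_const_nhds.mul (tendsto_const_nhds.sub (hexp0.mul tendsto_const_nhds)))
      have hzero : x₀ * ((0:ℝ) * -a) + b ^ 2 / (2 * γ) * (-a * (Pbar / (ρ + a) / a) + Pbar / (ρ + a))
          + (θ - ρ * c / b) / (2 * Λc * (ρ + a)) * (0 - 0 * -a) = 0 := by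
        have h2 : a ≠ 0 := hapos.ne'
        field_simp
        ring
      rw [hzero] at hlim
      apply hlim.congr
      intro t
      have h2 : Real.exp (-a * t) * (Real.exp (a * t) * g t) = g t := by
        rw [← mul_assoc, ← Real.exp_add, (by ring : -a * t + a * t = 0), Real.exp_zero, one_mul]
      rw [hDdef]
      dsimp only
      rw [h2]
      ring
    have hfin : Tendsto (fun t => 1 / b * D t) atTop (𝓝 (1 / b * 0)) := hDlim.const_mul (1 / b)
    rw [mul_zero] at hfin
    apply hfin.congr'
    filter_upwards [Ioi_mem_atTop (0:ℝ)] with t ht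
    rw [(hDm t ht).deriv]
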